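/- arXiv:2106.03288 — 2 statements merged into one kernel-verified Lean document; each statement's English description precedes it below -/
import Mathlib

section
/- Let Q be a finite acyclic quiver. If w : Q₁ → ℝ_{≥0} is a regular flow that is a vertex of the flow polytope Δ(θ) for θ = inc(w), then the support of w (the set of arrows a with w(a) ≠ 0) contains no cycle of the underlying undirected graph; i.e., the support is a forest. -/
def incR {V A : Type*} [Fintype A] [DecidableEq V] (hd tl : A → V) (w : A → ℝ) (i : V) : ℝ :=
  (∑ a, if hd a = i then w a else 0) - (∑ a, if tl a = i then w a else 0)

lemma incR_lin {V A : Type*} [Fintype A] [DecidableEq V] (hd tl : A → V)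
    (u v : A → ℝ) (s t : ℝ) (i : V) :
    incR hd tl (fun a => s * u a + t * v a) i
      = s * incR hd tl u i + t * incR hd tl v i := by
  unfold incR
  have h1 : ∀ (f : A → V), (∑ a, if f a = i then s * u a + t * v a else 0)
      = s * (∑ a, if f a = i then u a else 0) + t * (∑ a, if f a = i then v a else 0) := by
    intro f
    rw [Finset.mul_sum, Finset.mul_sum, ← Finset.sum_add_distrib]
    refine Finset.sum_congr rfl fun a _ => by split <;> simp
  rw [h1 hd, h1 tl]; ring

/-- If a regular flow `w` is a vertex of the flow polytope `Δ(inc w)` (not a proper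
convex combination of two distinct points of the polytope), then there is no nontrivial
circulation supported on the support of `w`; i.e. the support of `w` contains no
undirected cycle. -/
theorem stmt10 {V A : Type*} [Fintype V] [Fintype A] [DecidableEq V] (hd tl : A → V)
    (hacyc : ¬ ∃ i : V, Relation.TransGen (fun x y => ∃ a, tl a = x ∧ hd a = y) i i)
    (w : A → ℝ) (hw : ∀ a, 0 ≤ w a)
    (hvert : ∀ u v : A → ℝ,
      (∀ a, 0 ≤ u a) → (∀ i, incR hd tl u i = incR hd tl w i) →
      (∀ a, 0 ≤ v a) → (∀ i, incR hd tl v i = incR hd tl w i) →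
      ∀ s : ℝ, 0 < s → s < 1 → w = s • u + (1 - s) • v → u = v) :
    ¬ ∃ c : A → ℝ, c ≠ 0 ∧ (∀ i, incR hd tl c i = 0) ∧ ∀ a, c a ≠ 0 → w a ≠ 0 := by
  rintro ⟨c, hc, hinc, hsupp⟩
  -- the set of arrows where c is nonzero
  obtain ⟨a₀, ha₀'⟩ := Function.ne_iff.mp hc
  have ha₀ : c a₀ ≠ 0 := by simpa using ha₀'
  set S : Finset A := Finset.univ.filter (fun a => c a ≠ 0) with hS
  have hSne : S.Nonempty := ⟨a₀, by simp [hS, ha₀]⟩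
  set ε : ℝ := S.inf' hSne (fun a => w a / |c a|) with hε
  have hwpos : ∀ a ∈ S, 0 < w a := by
    intro a ha
    have : c a ≠ 0 := by simpa [hS] using ha
    exact lt_of_le_of_ne (hw a) (Ne.symm (hsupp a this))
  have hεpos : 0 < ε := by
    rw [hε]
    apply Finset.lt_inf'_iff .. |>.mpr
    intro a ha
    have hca : c a ≠ 0 := by simpa [hS] using ha
    exact div_pos (hwpos a ha) (abs_pos.mpr hca)
  have hkey : ∀ a, ε * |c a| ≤ w a := by
    intro a
    by_cases hca : c a = 0
    · simpa [hca] using hw a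
    · have haS : a ∈ S := by simp [hS, hca]
      have h1 : ε ≤ w a / |c a| := Finset.inf'_le _ haS
      have h2 : 0 < |c a| := abs_pos.mpr hca
      calc ε * |c a| ≤ (w a / |c a|) * |c a| := by
            exact mul_le_mul_of_nonneg_right h1 h2.le
        _ = w a := by field_simp
  set u : A → ℝ := fun a => w a + ε * c a with hu
  set v : A → ℝ := fun a => w a - ε * c a with hv
  have hupos : ∀ a, 0 ≤ u a := by
    intro a
    have := hkey a
    have h := neg_abs_le (c a)
    have : -(ε * |c a|) ≤ ε * c a := by nlinarith [abs_nonneg (c a)]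
    simp only [hu]
    linarith [hkey a]
  have hvpos : ∀ a, 0 ≤ v a := by
    intro a
    have h := le_abs_self (c a)
    have : ε * c a ≤ ε * |c a| := mul_le_mul_of_nonneg_left h hεpos.le
    simp only [hv]
    linarith [hkey a]
  have hiu : ∀ i, incR hd tl u i = incR hd tl w i := by
    intro i
    have : u = fun a => 1 * w a + ε * c a := by funext a; simp only [hu]; ring
    rw [this, incR_lin, hinc i]; ring
  have hiv : ∀ i, incR hd tl v i = incR hd tl w i := by
    intro i
    have : v = fun a => 1 * w a + (-ε) * c a := by funext a; simp only [hv]; ring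
    rw [this, incR_lin, hinc i]; ring
  have heq : u = v := by
    refine hvert u v hupos hiu hvpos hiv (1/2) (by norm_num) (by norm_num) ?_
    funext a
    simp only [Pi.add_apply, Pi.smul_apply, smul_eq_mul, hu, hv]
    ring
  have : ε * c a₀ = 0 := by
    have := congrFun heq a₀
    simp only [hu, hv] at this
    linarith
  rcases mul_eq_zero.mp this with h | h
  · exact hεpos.ne' h
  · exact ha₀ h
end

section
/- Let Q be a finite acyclic quiver with flow w : Q₁ → ℝ_{≥0} and θ = inc(w). For the subquiver P = Supp(w) (with P₀ = Q₀ and P₁ = {a : w(a) ≠ 0}), and for every P-successor closed subset V ⊆ Q₀, one has Σ_{i∈V} θ(i) ≥ 0, i.e., the support of any regular flow with weight θ is θ-semistable. -/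
/-- For a regular flow `w ≥ 0` with weight `θ = inc(w)` on a finite acyclic quiver, the
support subquiver `P = Supp(w)` is θ-semistable: every `P`-successor closed subset `W`
of vertices satisfies `Σ_{i∈W} θ i ≥ 0`. -/
theorem stmt16 {V A : Type*} [Fintype V] [Fintype A] [DecidableEq V] (hd tl : A → V)
    (hacyc : ¬ ∃ i : V, Relation.TransGen (fun x y => ∃ a, tl a = x ∧ hd a = y) i i)
    (w : A → ℝ) (hw : ∀ a, 0 ≤ w a) :
    ∀ W : Finset V, (∀ a : A, w a ≠ 0 → tl a ∈ W → hd a ∈ W) →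
      0 ≤ ∑ i ∈ W, incR hd tl w i := by
  intro W hW
  have key : ∑ i ∈ W, incR hd tl w i
      = ∑ a, ((if hd a ∈ W then w a else 0) - (if tl a ∈ W then w a else 0)) := by
    simp only [incR, Finset.sum_sub_distrib]
    congr 1
    · rw [Finset.sum_comm]
      exact Finset.sum_congr rfl fun a _ => Finset.sum_ite_eq W (hd a) fun _ => w a
    · rw [Finset.sum_comm]
      exact Finset.sum_congr rfl fun a _ => Finset.sum_ite_eq W (tl a) fun _ => w a
  rw [key]
  apply Finset.sum_nonneg
  intro a _
  by_cases htl : tl a ∈ W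
  · by_cases hwa : w a = 0
    · simp [hwa]
    · simp [htl, hW a hwa htl]
  · have h1 : (0:ℝ) ≤ if hd a ∈ W then w a else 0 := by
      split <;> simp [hw a]
    simp only [htl, if_false, sub_zero]
    exact h1
end
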